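/- Let τ > 0 and σ₀ ∈ ℝ, and suppose the coefficients of Δ satisfy a₁ = −4/τ − 2σ₀, a₀ = 6/τ² + 4σ₀/τ + σ₀², α₁ = −(2/τ)e^{σ₀τ}, and α₀ = (2/τ)e^{σ₀τ}(σ₀ − 3/τ). Then σ₀ is a strictly dominant root of Δ: Δ(σ₀) = 0 and every s ∈ ℂ with s ≠ σ₀ and Δ(s) = 0 satisfies Re s < σ₀. -/

import Mathlib

open Complex intervalIntegral

lemma deriv_piece (z : ℂ) (t : ℝ) :
    HasDerivAt (fun t : ℝ => -Complex.exp (-z*t) *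
      (z^3*((t:ℂ) - 2*t^2 + t^3) + z^2*(1 - 4*t + 3*(t:ℂ)^2) + z*(-4 + 6*(t:ℂ)) + 6))
      (Complex.exp (-z*t) * (z^4 * ((t:ℂ)*(1-(t:ℂ))^2))) t := by
  have hid : HasDerivAt (fun t : ℝ => (t:ℂ)) 1 t := Complex.ofRealCLM.hasDerivAt
  have hsq : HasDerivAt (fun t : ℝ => (t:ℂ)*(t:ℂ)) (2*(t:ℂ)) t := by
    have := hid.mul hid
    exact this.congr_deriv (by ring)
  have hcube : HasDerivAt (fun t : ℝ => (t:ℂ)*(t:ℂ)*(t:ℂ)) (3*(t:ℂ)^2) t := by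
    have := hsq.mul hid
    exact this.congr_deriv (by push_cast; ring)
  have hexp : HasDerivAt (fun t : ℝ => Complex.exp (-z*t)) (-z * Complex.exp (-z*t)) t := by
    have h1 : HasDerivAt (fun t : ℝ => -z*(t:ℂ)) (-z) t := by
      simpa using hid.const_mul (-z)
    simpa [mul_comm] using h1.cexp
  have hpoly : HasDerivAt (fun t : ℝ =>
      (z^3*((t:ℂ) - 2*t^2 + t^3) + z^2*(1 - 4*t + 3*(t:ℂ)^2) + z*(-4 + 6*(t:ℂ)) + 6))
      (z^3*(1 - 4*t + 3*(t:ℂ)^2) + z^2*(-4 + 6*(t:ℂ)) + z*6) t := by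
    have h2 : HasDerivAt (fun t : ℝ => ((t:ℂ) - 2*t^2 + t^3)) (1 - 4*t + 3*(t:ℂ)^2) t := by
      have := (hid.sub (hsq.const_mul (2:ℂ))).add hcube
      convert this using 2 with t
      · rfl
      · simp only [Pi.add_apply, Pi.sub_apply]; ring
      all_goals push_cast; ring
    have h4 : HasDerivAt (fun t : ℝ => (1 - 4*(t:ℂ) + 3*(t:ℂ)^2)) (-4 + 6*(t:ℂ)) t := by
      have := ((hid.const_mul (4:ℂ)).const_sub 1).add (hsq.const_mul (3:ℂ))
      convert this using 2 with t
      · rfl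
      · simp only [Pi.add_apply, Pi.sub_apply]; ring
      all_goals push_cast; ring
    have h5 : HasDerivAt (fun t : ℝ => (-4 + 6*(t:ℂ))) (6:ℂ) t := by
      simpa using (hid.const_mul (6:ℂ)).const_add (-4)
    have := (((h2.const_mul (z^3)).add (h4.const_mul (z^2))).add (h5.const_mul z)).add_const (6:ℂ)
    convert this using 1
    · rfl
    · rfl
    all_goals ring
  have := (hexp.neg.mul hpoly)
  convert this using 1
  · rfl
  · rfl
  simp only [Pi.neg_apply]; push_cast; ring

lemma cont_integrand (z : ℂ) : Continuous (fun t : ℝ => Complex.exp (-z*t) * ((t:ℂ)*(1-(t:ℂ))^2)) := by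
  fun_prop

lemma I_eq (z : ℂ) :
    z^4 * ∫ t in (0:ℝ)..1, Complex.exp (-z*t) * ((t:ℂ)*(1-(t:ℂ))^2)
      = (z^2 - 4*z + 6) - Complex.exp (-z)*(2*z+6) := by
  have hint : IntervalIntegrable (fun t : ℝ => Complex.exp (-z*t) * (z^4 * ((t:ℂ)*(1-(t:ℂ))^2)))
      MeasureTheory.volume 0 1 := by
    apply Continuous.intervalIntegrable; fun_prop
  have ftc := intervalIntegral.integral_eq_sub_of_hasDerivAt
    (fun t _ => deriv_piece z t) hint
  have hrw : ∀ t : ℝ, z^4 * (Complex.exp (-z*t) * ((t:ℂ)*(1-(t:ℂ))^2))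
      = Complex.exp (-z*t) * (z^4 * ((t:ℂ)*(1-(t:ℂ))^2)) := fun t => by ring
  rw [← intervalIntegral.integral_const_mul,
    intervalIntegral.integral_congr (fun t _ => hrw t), ftc]
  push_cast
  simp only [mul_one, mul_zero, Complex.exp_zero]
  ring

lemma small_im (z : ℂ) (hy : |z.im| ≤ 3)
    (hI : (∫ t in (0:ℝ)..1, Complex.exp (-z*t) * ((t:ℂ)*(1-(t:ℂ))^2)) = 0) : False := by
  set c : ℂ := Complex.exp (Complex.I * (z.im/2)) with hc
  have h2 : (∫ t in (0:ℝ)..1, c * (Complex.exp (-z*t) * ((t:ℂ)*(1-(t:ℂ))^2))) = 0 := by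
    rw [intervalIntegral.integral_const_mul, hI, mul_zero]
  have hcont : Continuous (fun t : ℝ => c * (Complex.exp (-z*t) * ((t:ℂ)*(1-(t:ℂ))^2))) := by
    fun_prop
  have hii : IntervalIntegrable (fun t : ℝ => c * (Complex.exp (-z*t) * ((t:ℂ)*(1-(t:ℂ))^2)))
      MeasureTheory.volume 0 1 := hcont.intervalIntegrable 0 1
  have h3 := Complex.reCLM.intervalIntegral_comp_comm hii
  rw [h2] at h3
  simp only [map_zero] at h3
  have hre : ∀ t : ℝ, Complex.reCLM (c * (Complex.exp (-z*t) * ((t:ℂ)*(1-(t:ℂ))^2)))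
      = (t*(1-t)^2) * (Real.exp (-z.re*t) * Real.cos (z.im/2 - z.im*t)) := by
    intro t
    have hkey : c * (Complex.exp (-z*t) * ((t:ℂ)*(1-(t:ℂ))^2))
        = ((t*(1-t)^2 : ℝ) : ℂ) * Complex.exp (Complex.I * (z.im/2) + -z*t) := by
      rw [Complex.exp_add, hc]
      push_cast; ring
    rw [hkey]
    simp only [Complex.reCLM_apply, Complex.re_ofReal_mul, Complex.exp_re]
    have h5 : (Complex.I * (z.im/2) + -z*t).re = -z.re*t := by
      simp [Complex.add_re, Complex.mul_re]
    have h6 : (Complex.I * (z.im/2) + -z*t).im = z.im/2 - z.im*t := by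
      simp [Complex.add_im, Complex.mul_im]
      ring
    rw [h5, h6]
  rw [intervalIntegral.integral_congr (fun t _ => hre t)] at h3
  have hpos : 0 < ∫ t in (0:ℝ)..1, (t*(1-t)^2) * (Real.exp (-z.re*t) * Real.cos (z.im/2 - z.im*t)) := by
    apply intervalIntegral.intervalIntegral_pos_of_pos_on
    · apply Continuous.intervalIntegrable; fun_prop
    · intro t ht
      obtain ⟨ht0, ht1⟩ := ht
      have hcos : 0 < Real.cos (z.im/2 - z.im*t) := by
        apply Real.cos_pos_of_mem_Ioo
        constructor
        · nlinarith [Real.pi_gt_three, abs_le.1 hy]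
        · nlinarith [Real.pi_gt_three, abs_le.1 hy]
      have h7 : 0 < t*(1-t)^2 := mul_pos ht0 (pow_pos (by linarith) 2)
      exact mul_pos h7 (mul_pos (Real.exp_pos _) hcos)
    · norm_num
  rw [h3] at hpos
  exact lt_irrefl 0 hpos

lemma big_im (x w : ℝ) (hx : 0 ≤ x) (hw : 9 ≤ w) :
    (2*x+6)^2 + 4*w < Real.exp (2*x) * ((x^2-4*x+6-w)^2 + w*(2*x-4)^2) := by
  have hE : 1 + 2*x + 2*x^2 + (4/3)*x^3 ≤ Real.exp (2*x) := by
    have h := Real.sum_le_exp_of_nonneg (by linarith : (0:ℝ) ≤ 2*x) 4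
    norm_num [Finset.sum_range_succ, Nat.factorial] at h
    nlinarith [h]
  have hQ : 0 < (x^2-4*x+6-w)^2 + w*(2*x-4)^2 := by nlinarith [sq_nonneg (2*x-4), sq_nonneg (x^2-4*x+6-w), sq_nonneg (x-2)]
  have := mul_le_mul_of_nonneg_right hE (le_of_lt hQ)
  nlinarith [this, sq_nonneg (x^2-4*x+6-w), sq_nonneg (x-2), mul_nonneg hx (sq_nonneg (2*x-4)), sq_nonneg x, mul_nonneg (mul_nonneg hx hx) hx, sq_nonneg (w-9), mul_nonneg hx (sq_nonneg (x^2-4*x+6-w))]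

lemma no_rhp_root (z : ℂ) (hz : z ≠ 0) (hx : 0 ≤ z.re)
    (hf : z^2 - 4*z + 6 = Complex.exp (-z) * (2*z+6)) : False := by
  set x := z.re with hxdef
  set y := z.im with hydef
  by_cases hy : |z.im| ≤ 3
  · have h0 : z^4 * ∫ t in (0:ℝ)..1, Complex.exp (-z*t) * ((t:ℂ)*(1-(t:ℂ))^2) = 0 := by
      rw [I_eq z, hf]; ring
    have hI : (∫ t in (0:ℝ)..1, Complex.exp (-z*t) * ((t:ℂ)*(1-(t:ℂ))^2)) = 0 := by
      rcases mul_eq_zero.1 h0 with h | h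
      · exact absurd h (pow_ne_zero 4 hz)
      · exact h
    exact small_im z hy hI
  · have hw : 9 ≤ y^2 := by
      have h3 : 3 < |z.im| := lt_of_not_ge hy
      nlinarith [_root_.sq_abs z.im, abs_nonneg z.im]
    have hre2 : (z^2 - 4*z + 6).re = x^2 - 4*x + 6 - y^2 := by
      simp [pow_two, Complex.mul_re, Complex.add_re, Complex.sub_re]
      ring
    have him2 : (z^2 - 4*z + 6).im = y*(2*x-4) := by
      simp [pow_two, Complex.mul_im, Complex.add_im, Complex.sub_im]
      ring
    have heq : (x^2-4*x+6-y^2)^2 + y^2*(2*x-4)^2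
        = Real.exp (-x)^2 * ((2*x+6)^2 + 4*y^2) := by
      have h1 : Complex.normSq (z^2 - 4*z + 6) = (x^2-4*x+6-y^2)^2 + y^2*(2*x-4)^2 := by
        rw [Complex.normSq_apply, hre2, him2]; ring
      have h2 : Complex.normSq (Complex.exp (-z) * (2*z+6))
          = Real.exp (-x)^2 * ((2*x+6)^2 + 4*y^2) := by
        rw [map_mul]
        have ha : Complex.normSq (Complex.exp (-z)) = Real.exp (-x)^2 := by
          rw [← Complex.sq_norm, Complex.norm_exp]
          simp [hxdef]
        have hb : Complex.normSq (2*z+6) = (2*x+6)^2 + 4*y^2 := by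
          rw [Complex.normSq_apply]
          simp [Complex.mul_re, Complex.mul_im, Complex.add_re, Complex.add_im]
          ring
        rw [ha, hb]
      rw [← h1, ← h2, hf]
    have hexp2 : Real.exp (2*x) * Real.exp (-x)^2 = 1 := by
      rw [pow_two, ← Real.exp_add, ← Real.exp_add]
      norm_num [Real.exp_eq_one_iff]
      ring
    have hB : Real.exp (2*x) * ((x^2-4*x+6-y^2)^2 + y^2*(2*x-4)^2) = (2*x+6)^2 + 4*y^2 := by
      linear_combination Real.exp (2*x) * heq + ((2*x+6)^2 + 4*y^2) * hexp2
    have := big_im x (y^2) hx hw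
    linarith [this, hB]

/-- If the coefficients of Δ are chosen so that σ₀ is a real root of maximal
multiplicity 4, then σ₀ is a strictly dominant root of Δ. -/
theorem real_root_strictly_dominant
    (τ σ₀ a₁ a₀ α₁ α₀ : ℝ) (hτ : 0 < τ)
    (ha₁ : a₁ = -4 / τ - 2 * σ₀)
    (ha₀ : a₀ = 6 / τ ^ 2 + 4 * σ₀ / τ + σ₀ ^ 2)
    (hα₁ : α₁ = -(2 / τ) * Real.exp (σ₀ * τ))
    (hα₀ : α₀ = (2 / τ) * Real.exp (σ₀ * τ) * (σ₀ - 3 / τ))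
    (Δ : ℂ → ℂ)
    (hΔ : ∀ s : ℂ, Δ s = s ^ 2 + a₁ * s + a₀ + Complex.exp (-s * τ) * (α₁ * s + α₀)) :
    Δ σ₀ = 0 ∧ ∀ s : ℂ, s ≠ (σ₀ : ℂ) → Δ s = 0 → s.re < σ₀ := by
  have hτ0 : (τ:ℂ) ≠ 0 := by
    exact_mod_cast hτ.ne'
  have hα : ∀ s : ℂ, (α₁:ℂ) * s + (α₀:ℂ)
      = Complex.exp ((σ₀:ℂ)*(τ:ℂ)) * ((2/(τ:ℂ)) * ((σ₀:ℂ) - s - 3/(τ:ℂ))) := by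
    intro s
    rw [hα₁, hα₀]
    push_cast
    ring
  have main : ∀ E s : ℂ,
      (τ:ℂ)^2 * (s^2 + (-4/(τ:ℂ) - 2*(σ₀:ℂ))*s + (6/(τ:ℂ)^2 + 4*(σ₀:ℂ)/(τ:ℂ) + (σ₀:ℂ)^2)
        + E * ((2/(τ:ℂ)) * ((σ₀:ℂ) - s - 3/(τ:ℂ))))
      = (((τ:ℂ)*(s-σ₀))^2 - 4*((τ:ℂ)*(s-σ₀)) + 6) - E * (2*((τ:ℂ)*(s-σ₀)) + 6) := by
    intro E s
    have h2 : (τ:ℂ)^2 ≠ 0 := pow_ne_zero 2 hτ0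
    field_simp
    ring
  have hkey : ∀ s : ℂ, (τ:ℂ)^2 * Δ s
      = (((τ:ℂ)*(s-σ₀))^2 - 4*((τ:ℂ)*(s-σ₀)) + 6)
        - Complex.exp (-((τ:ℂ)*(s-σ₀))) * (2*((τ:ℂ)*(s-σ₀)) + 6) := by
    intro s
    rw [hΔ s, hα s, ← mul_assoc, ← Complex.exp_add,
      show (-s*(τ:ℂ) + (σ₀:ℂ)*(τ:ℂ)) = -((τ:ℂ)*(s-σ₀)) from by ring,
      ha₁, ha₀]
    have := main (Complex.exp (-((τ:ℂ)*(s-σ₀)))) s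
    rw [← this]
    push_cast
    ring
  constructor
  · have h := hkey σ₀
    simp only [sub_self, mul_zero, ne_eq] at h
    norm_num [Complex.exp_zero] at h
    rcases h with h | h
    · exact absurd h (by exact_mod_cast hτ0)
    · exact h
  · intro s hs hΔ0
    by_contra hge
    push_neg at hge
    set w : ℂ := (τ:ℂ)*(s-σ₀) with hwdef
    have hw0 : w ≠ 0 := mul_ne_zero hτ0 (sub_ne_zero.2 hs)
    have hwre : 0 ≤ w.re := by
      have hre : w.re = τ * (s.re - σ₀) := by
        simp [hwdef, Complex.mul_re, Complex.sub_re]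
      rw [hre]
      have : 0 ≤ s.re - σ₀ := by linarith
      positivity
    have h := hkey s
    rw [hΔ0, mul_zero] at h
    have hfw : w^2 - 4*w + 6 = Complex.exp (-w) * (2*w+6) := by
      linear_combination -h
    exact no_rhp_root w hw0 hwre hfw
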